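/- Let (x,f) ∼ (x',f') denote the relation that f_{i,i+1} ≤ f'_{i,i+1} for all i = 0,…,n together with flow balance at every node. Assume the rate conditions: (a) x_1 ≥ x'_1 ⟹ λ(x) ≤ λ'(x'); (b) x_i ≤ x'_i and x_{i+1} ≥ x'_{i+1} ⟹ μ_i(x) ≤ μ'_i(x') for 1 ≤ i ≤ n−1; (c) x_n ≤ x'_n ⟹ μ_n(x) ≤ μ'_n(x'). Then the set of ∼-related pairs is absorbing for the marching soldiers coupling of the state–flow processes: every transition of the coupling with strictly positive rate maps a ∼-related pair to a ∼-related pair. -/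

import Mathlib

/-- Effect on the population vector of a transition over link `j` of the open
linear network with links `(0,1),…,(n−1,n),(n,0)` (nodes 0-based in `Fin n`,
links indexed by `Fin (n+1)`: link `j` goes from node `j−1` to node `j`,
where "node `−1`" and "node `n`" are the outside world): one job is added at
node `j` (if it exists) and removed from node `j−1` (if it exists). -/
def stepX (n : ℕ) (j : Fin (n + 1)) (x : Fin n → ℤ) : Fin n → ℤ :=
  fun k => x k + (if (j : ℕ) = (k : ℕ) then 1 else 0)
             - (if (j : ℕ) = (k : ℕ) + 1 then 1 else 0)

/-- Effect on the flow counters of a transition over link `j`. -/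
def stepF (n : ℕ) (j : Fin (n + 1)) (f : Fin (n + 1) → ℤ) : Fin (n + 1) → ℤ :=
  fun l => f l + (if l = j then 1 else 0)

/-- The relation `(x,f) ∼ (x',f')`: all flow counters are ordered,
`f_{i,i+1} ≤ f'_{i,i+1}`, and flow balance holds at every node. -/
def FlowRel (n : ℕ) (x : Fin n → ℤ) (f : Fin (n + 1) → ℤ)
    (x' : Fin n → ℤ) (f' : Fin (n + 1) → ℤ) : Prop :=
  (∀ j : Fin (n + 1), f j ≤ f' j) ∧
  (∀ i : Fin n, x i - f i.castSucc + f i.succ = x' i - f' i.castSucc + f' i.succ)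

/-- Absorbing-set lemma for the marching soldiers coupling of the state–flow
processes of two open linear networks.  The rates are combined into
`r, r' : Fin (n+1) → state → ℝ` with `r 0 = λ` and `r j = μ_j` for
`1 ≤ j ≤ n`.  Under the rate conditions (a) `x₁ ≥ x'₁ ⟹ λ(x) ≤ λ'(x')`,
(b) `x_i ≤ x'_i ∧ x_{i+1} ≥ x'_{i+1} ⟹ μ_i(x) ≤ μ'_i(x')` for internal `i`,
and (c) `x_n ≤ x'_n ⟹ μ_n(x) ≤ μ'_n(x')`, every transition of the coupling
with strictly positive rate (joint moves at rate `min`, solitary moves at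
the rate excesses) maps a `∼`-related pair to a `∼`-related pair. -/
theorem stmt7 (n : ℕ) (hn : 0 < n)
    (S S' : Set (Fin n → ℤ))
    (r r' : Fin (n + 1) → (Fin n → ℤ) → ℝ)
    -- (a)
    (ha : ∀ x ∈ S, ∀ x' ∈ S', x' ⟨0, hn⟩ ≤ x ⟨0, hn⟩ → r 0 x ≤ r' 0 x')
    -- (b)
    (hb : ∀ (j : Fin (n + 1)) (hj0 : 0 < (j : ℕ)) (hjn : (j : ℕ) < n),
      ∀ x ∈ S, ∀ x' ∈ S',
        x ⟨(j : ℕ) - 1, by omega⟩ ≤ x' ⟨(j : ℕ) - 1, by omega⟩ →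
        x' ⟨(j : ℕ), hjn⟩ ≤ x ⟨(j : ℕ), hjn⟩ →
        r j x ≤ r' j x')
    -- (c)
    (hc : ∀ x ∈ S, ∀ x' ∈ S',
      x ⟨n - 1, by omega⟩ ≤ x' ⟨n - 1, by omega⟩ →
      r (Fin.last n) x ≤ r' (Fin.last n) x')
    (x x' : Fin n → ℤ) (hx : x ∈ S) (hx' : x' ∈ S')
    (f f' : Fin (n + 1) → ℤ)
    (hrel : FlowRel n x f x' f') :
    ∀ j : Fin (n + 1),
      (0 < min (r j x) (r' j x') →
        FlowRel n (stepX n j x) (stepF n j f) (stepX n j x') (stepF n j f')) ∧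
      (r' j x' < r j x →
        FlowRel n (stepX n j x) (stepF n j f) x' f') ∧
      (r j x < r' j x' →
        FlowRel n x f (stepX n j x') (stepF n j f')) := by

  obtain ⟨hle, hbal⟩ := hrel
  intro j
  have hbalstep : ∀ (y : Fin n → ℤ) (g : Fin (n+1) → ℤ) (i : Fin n),
      stepX n j y i - stepF n j g i.castSucc + stepF n j g i.succ
        = y i - g i.castSucc + g i.succ := by
    intro y g i
    simp only [stepX, stepF, Fin.ext_iff, Fin.coe_castSucc, Fin.val_succ]
    split_ifs <;> omega
  have key : r' j x' < r j x → f j < f' j := by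
    intro hr
    by_contra hfe
    push_neg at hfe
    have hfe' : f j = f' j := le_antisymm (hle j) hfe
    rcases Nat.eq_zero_or_pos (j : ℕ) with h0 | h0
    · have hj : j = 0 := by ext; simpa using h0
      subst hj
      have hb0 := hbal ⟨0, hn⟩
      have hcs : (⟨0, hn⟩ : Fin n).castSucc = (0 : Fin (n+1)) := by
        ext; simp
      have hs := hle (⟨0, hn⟩ : Fin n).succ
      rw [hcs] at hb0
      have hx0 : x' ⟨0, hn⟩ ≤ x ⟨0, hn⟩ := by omega
      exact absurd (ha x hx x' hx' hx0) (not_le.mpr hr)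
    · rcases Nat.lt_or_ge (j : ℕ) n with hjn | hjn
      · have hbL := hbal ⟨(j:ℕ) - 1, by omega⟩
        have hbR := hbal ⟨(j:ℕ), hjn⟩
        have e1 : (⟨(j:ℕ) - 1, by omega⟩ : Fin n).succ = j := by
          ext; simp; omega
        have e2 : (⟨(j:ℕ), hjn⟩ : Fin n).castSucc = j := by
          ext; simp
        rw [e1] at hbL
        rw [e2] at hbR
        have hL := hle (⟨(j:ℕ) - 1, by omega⟩ : Fin n).castSucc
        have hR := hle (⟨(j:ℕ), hjn⟩ : Fin n).succ
        have h1 : x ⟨(j:ℕ)-1, by omega⟩ ≤ x' ⟨(j:ℕ)-1, by omega⟩ := by omega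
        have h2 : x' ⟨(j:ℕ), hjn⟩ ≤ x ⟨(j:ℕ), hjn⟩ := by omega
        exact absurd (hb j h0 hjn x hx x' hx' h1 h2) (not_le.mpr hr)
      · have hjl : j = Fin.last n := by
          ext
          simp only [Fin.val_last]
          omega
        subst hjl
        have hbL := hbal ⟨n - 1, by omega⟩
        have e1 : (⟨n - 1, by omega⟩ : Fin n).succ = Fin.last n := by
          ext; simp; omega
        rw [e1] at hbL
        have hL := hle (⟨n - 1, by omega⟩ : Fin n).castSucc
        have h1 : x ⟨n-1, by omega⟩ ≤ x' ⟨n-1, by omega⟩ := by omega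
        exact absurd (hc x hx x' hx' h1) (not_le.mpr hr)
  refine ⟨?_, ?_, ?_⟩
  · intro _
    refine ⟨fun l => ?_, fun i => ?_⟩
    · simp only [stepF]
      exact add_le_add_left (hle l) _
    · rw [hbalstep, hbalstep]; exact hbal i
  · intro hr
    refine ⟨fun l => ?_, fun i => ?_⟩
    · simp only [stepF]
      split_ifs with h
      · subst h
        have := key hr
        omega
      · simpa using hle l
    · rw [hbalstep]; exact hbal i
  · intro _
    refine ⟨fun l => ?_, fun i => ?_⟩
    · simp only [stepF]
      split_ifs with h
      · have := hle l; omega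
      · simpa using hle l
    · rw [hbalstep]; exact hbal i
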